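/- Let q be a real number with q > 1 and m ≥ 1 an integer. For 1 ≤ k ≤ m define a2_k = (1-q) · q^{-2k^2-k} / (q^{-2};q^{-2})_{k-1} · ( (q^{-2k};q^{-2})_{m-k} / (q^{-2};q^{-2})_{m-k} ) · q^{-m+k}. Then Σ_{k=1}^{m} a2_k = q^{-m} (1-q) · Σ_{s=0}^{m-1} (-1)^s ( (q^{2m-2}; q^{-2})_s / ( (q^{-2}; q^{-2})_s )^2 ) · q^{-s^2 - 3s - 2sm - 2}. -/

import Mathlib

noncomputable def qPoch (a Q : ℝ) (n : ℕ) : ℝ := ∏ j ∈ Finset.range n, (1 - a * Q ^ j)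

private lemma zpow_sum_range (q : ℝ) (hq : q ≠ 0) (f : ℕ → ℤ) (n : ℕ) :
    ∏ j ∈ Finset.range n, q ^ f j = q ^ (∑ j ∈ Finset.range n, f j) := by
  induction n with
  | zero => simp
  | succ n ih => rw [Finset.prod_range_succ, Finset.sum_range_succ, ih, zpow_add₀ hq]

private lemma qPoch_add (a Q : ℝ) (x y : ℕ) :
    qPoch a Q (x + y) = qPoch a Q x * qPoch (a * Q ^ x) Q y := by
  unfold qPoch
  rw [Finset.prod_range_add]
  congr 1
  refine Finset.prod_congr rfl fun j _ => ?_
  rw [pow_add]; ring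

private lemma qPoch_pos (q : ℝ) (hq : 1 < q) (n : ℕ) :
    0 < qPoch (q ^ (-2:ℤ)) (q ^ (-2:ℤ)) n := by
  have hq0 : (0:ℝ) < q := lt_trans one_pos hq
  refine Finset.prod_pos fun j _ => ?_
  have h1 : q ^ (-2:ℤ) * (q ^ (-2:ℤ)) ^ j = q ^ (-2 + (-2) * (j:ℤ)) := by
    rw [zpow_add₀ (ne_of_gt hq0), zpow_mul, zpow_natCast]
  rw [h1]
  have h2 : q ^ (-2 + (-2) * (j:ℤ)) < 1 := zpow_lt_one_of_neg₀ hq (by omega)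
  linarith

private lemma qPoch_reflect (q : ℝ) (hq0 : q ≠ 0) (c : ℤ) (s : ℕ) :
    qPoch (q ^ c) (q ^ (-2:ℤ)) s
      = (-1:ℝ) ^ s * q ^ ((s:ℤ) * c - s * (s - 1))
          * qPoch (q ^ (-c + 2 * s - 2)) (q ^ (-2:ℤ)) s := by
  have hsum : ∑ j ∈ Finset.range s, (c - 2*(j:ℤ)) = (s:ℤ)*c - s*(s-1) := by
    induction s with
    | zero => simp
    | succ n ih => rw [Finset.sum_range_succ, ih]; push_cast; ring
  have key : ∀ j ∈ Finset.range s,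
      (1 - q ^ c * (q ^ (-2:ℤ)) ^ j)
        = ((-1) * q ^ (c - 2 * (j:ℤ)))
            * (1 - q ^ (-c + 2*(s:ℤ) - 2) * (q ^ (-2:ℤ)) ^ (s - 1 - j)) := by
    intro j hj
    have hj' : j < s := Finset.mem_range.mp hj
    have e1 : (q ^ (-2:ℤ)) ^ j = q ^ ((-2) * (j:ℤ)) := by rw [zpow_mul, zpow_natCast]
    have e2 : (q ^ (-2:ℤ)) ^ (s - 1 - j) = q ^ ((-2) * ((s:ℤ) - 1 - j)) := by
      have ecast : ((s - 1 - j : ℕ) : ℤ) = (s:ℤ) - 1 - j := by omega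
      rw [← zpow_natCast (q ^ (-2:ℤ)) (s - 1 - j), ecast, ← zpow_mul]
    rw [e1, e2, ← zpow_add₀ hq0, ← zpow_add₀ hq0]
    have h3 : q ^ (c - 2*(j:ℤ)) * q ^ (-(c - 2*(j:ℤ))) = 1 := by
      rw [← zpow_add₀ hq0]; simp
    have h4 : (-c + 2*(s:ℤ) - 2 + (-2) * ((s:ℤ) - 1 - j)) = -(c - 2*(j:ℤ)) := by ring
    rw [h4]
    have h5 : c + (-2) * (j:ℤ) = c - 2*(j:ℤ) := by ring
    rw [h5]
    linear_combination (-1 : ℝ) * h3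
  unfold qPoch
  rw [Finset.prod_congr rfl key, Finset.prod_mul_distrib, Finset.prod_mul_distrib,
    Finset.prod_const, Finset.card_range, zpow_sum_range q hq0, hsum,
    Finset.prod_range_reflect (fun j => 1 - q ^ (-c + 2*(s:ℤ) - 2) * (q ^ (-2:ℤ)) ^ j) s]

private lemma term_eq (q X Y Z sgn : ℝ) (hq0 : q ≠ 0) (hX : X ≠ 0) (hY : Y ≠ 0)
    {α β E γ μ : ℤ} (hpow : α + β = E + γ - μ) (hsgn : sgn * sgn = 1) :
    (1 - q) * q ^ α / X * (Z / X / Y) * q ^ β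
      = q ^ (-μ) * (1 - q) * (sgn * (sgn * q ^ E * (Z / Y) / X ^ 2) * q ^ γ) := by
  obtain rfl : γ = α + β + μ - E := by omega
  rcases mul_self_eq_one_iff.mp hsgn with rfl | rfl <;>
  · rw [zpow_sub₀ hq0, zpow_add₀ hq0, zpow_add₀ hq0, zpow_neg]
    have hE : q ^ E ≠ 0 := zpow_ne_zero _ hq0
    have hμ : q ^ μ ≠ 0 := zpow_ne_zero _ hq0
    field_simp

theorem anzanello_a2_sum (q : ℝ) (hq : 1 < q) (m : ℕ) (hm : 1 ≤ m) :
    ∑ k ∈ Finset.Icc 1 m,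
      (1 - q) * q ^ (-(2 * (k : ℤ) ^ 2) - k) / qPoch (q ^ (-2 : ℤ)) (q ^ (-2 : ℤ)) (k - 1)
        * (qPoch (q ^ (-(2 * (k : ℤ)))) (q ^ (-2 : ℤ)) (m - k)
            / qPoch (q ^ (-2 : ℤ)) (q ^ (-2 : ℤ)) (m - k))
        * q ^ (-(m : ℤ) + k)
    = q ^ (-(m : ℤ)) * (1 - q) * ∑ s ∈ Finset.range m,
        (-1 : ℝ) ^ s
          * (qPoch (q ^ (2 * (m : ℤ) - 2)) (q ^ (-2 : ℤ)) s
              / (qPoch (q ^ (-2 : ℤ)) (q ^ (-2 : ℤ)) s) ^ 2)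
          * q ^ (-(s : ℤ) ^ 2 - 3 * s - 2 * s * m - 2) := by
  have hq0 : q ≠ 0 := by positivity
  have hmap : Finset.Icc 1 m
      = Finset.map ⟨fun s => s + 1, add_left_injective 1⟩ (Finset.range m) := by
    ext x
    simp only [Finset.mem_Icc, Finset.mem_map, Finset.mem_range, Function.Embedding.coeFn_mk]
    constructor
    · rintro ⟨h1, h2⟩; exact ⟨x - 1, by omega, by omega⟩
    · rintro ⟨a, ha, rfl⟩; omega
  rw [hmap, Finset.sum_map, Finset.mul_sum]
  refine Finset.sum_congr rfl fun s hs => ?_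
  have hs' : s < m := Finset.mem_range.mp hs
  simp only [Function.Embedding.coeFn_mk, Nat.add_sub_cancel]
  push_cast
  set n := m - (s + 1) with hn
  have hnz : (n:ℤ) = (m:ℤ) - 1 - (s:ℤ) := by omega
  have hPs : qPoch (q ^ (-2:ℤ)) (q ^ (-2:ℤ)) s ≠ 0 := ne_of_gt (qPoch_pos q hq s)
  have hPn : qPoch (q ^ (-2:ℤ)) (q ^ (-2:ℤ)) n ≠ 0 := ne_of_gt (qPoch_pos q hq n)
  have hbase1 : q ^ (-(2 * ((s:ℤ) + 1))) = q ^ (-2:ℤ) * (q ^ (-2:ℤ)) ^ s := by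
    rw [← zpow_natCast (q ^ (-2:ℤ)) s, ← zpow_mul, ← zpow_add₀ hq0]
    congr 1; ring
  have hA : qPoch (q ^ (-(2 * ((s:ℤ) + 1)))) (q ^ (-2:ℤ)) n
      = qPoch (q ^ (-2:ℤ)) (q ^ (-2:ℤ)) (s + n) / qPoch (q ^ (-2:ℤ)) (q ^ (-2:ℤ)) s := by
    rw [hbase1, eq_div_iff hPs, qPoch_add]
    ring
  have hbase2 : q ^ (-(2*(m:ℤ)-2) + 2*(s:ℤ) - 2) = q ^ (-2:ℤ) * (q ^ (-2:ℤ)) ^ n := by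
    rw [← zpow_natCast (q ^ (-2:ℤ)) n, ← zpow_mul, ← zpow_add₀ hq0]
    congr 1
    rw [hnz]; ring
  have hB : qPoch (q ^ (-(2*(m:ℤ)-2) + 2*(s:ℤ) - 2)) (q ^ (-2:ℤ)) s
      = qPoch (q ^ (-2:ℤ)) (q ^ (-2:ℤ)) (s + n) / qPoch (q ^ (-2:ℤ)) (q ^ (-2:ℤ)) n := by
    rw [hbase2, eq_div_iff hPn, add_comm s n, qPoch_add]
    ring
  rw [hA, qPoch_reflect q hq0 (2*(m:ℤ)-2) s, hB]
  have hsgn : ((-1:ℝ)) ^ s * (-1) ^ s = 1 := by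
    rcases neg_one_pow_eq_or ℝ s with h | h <;> rw [h] <;> norm_num
  exact term_eq q _ _ _ ((-1:ℝ)^s) hq0 hPs hPn (by ring) hsgn
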